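/- There exists a 1-step shift space over an infinite alphabet that is not conjugate to any 0-step shift space. Concretely: fix x_0 ∈ A (A infinite) and define f̃ : A² → {0,1} by f̃(x,y) = 1 iff (x = x_0) or (x ≠ x_0 and y = x). Then the 1-step shift X_f (forbidding pairs with f̃ = 0) contains exactly one word of length 1 (namely x_0), while every nonempty 0-step shift space (a full shift Σ_B) over an alphabet making it contain length-1 words contains infinitely many words of length 1; hence X_f is not conjugate to any 0-step shift. -/

import Mathlib

open Set Filter Topology

/-- Elements of the full shift `Σ_A`: `Option`-valued sequences that stay `none`
once they are `none` (so they are either everywhere-defined infinite sequences,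
or finite words followed by `none`s; the empty word is the all-`none` sequence). -/
def IsWordFun {A : Type*} (x : ℕ → Option A) : Prop :=
  ∀ m n : ℕ, m ≤ n → x m = none → x n = none

/-- The full shift `Σ_A = A^ℕ ∪ {finite words over A}`. -/
def FullShift (A : Type*) : Type _ := {x : ℕ → Option A // IsWordFun x}

namespace FullShift

variable {A B : Type*}

/-- The length of an element of the full shift, in `ℕ∞`. -/
noncomputable def len (x : FullShift A) : ℕ∞ :=
  sInf {n : ℕ∞ | ∃ m : ℕ, n = (m : ℕ∞) ∧ x.1 m = none}

/-- The shift map `σ`, deleting the first letter. -/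
def shift (x : FullShift A) : FullShift A :=
  ⟨fun n => x.1 (n + 1), fun m n h hm => x.2 (m + 1) (n + 1) (by omega) hm⟩

/-- The empty word `∅`. -/
def emptyWord : FullShift A := ⟨fun _ => none, fun _ _ _ _ => rfl⟩

/-- The finite word determined by a list. -/
def word (l : List A) : FullShift A :=
  ⟨fun n => l[n]?, by
    intro m n h hm
    rw [List.getElem?_eq_none_iff] at hm ⊢
    omega⟩

/-- The infinite sequence determined by a function `ℕ → A`. -/
def infSeq (g : ℕ → A) : FullShift A :=
  ⟨fun n => some (g n), by intro m n _ hm; simp at hm⟩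

/-- Generalized cylinder set `Z(w, F)`: elements beginning with the finite word `w`
whose next letter, if any, does not lie in the finite set `F`. -/
def Cyl (w : List A) (F : Finset A) : Set (FullShift A) :=
  {y | (∀ i < w.length, y.1 i = w[i]?) ∧ ∀ a ∈ F, y.1 w.length ≠ some a}

/-- The topology on `Σ_A` generated by the generalized cylinder sets. -/
instance : TopologicalSpace (FullShift A) :=
  TopologicalSpace.generateFrom {S | ∃ (w : List A) (F : Finset A), S = Cyl w F}

/-- A shift space: closed, shift-invariant, with the infinite-extension property. -/
def IsShiftSpace (Λ : Set (FullShift A)) : Prop :=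
  IsClosed Λ ∧ (∀ x ∈ Λ, shift x ∈ Λ) ∧
    ∀ x ∈ Λ, ∀ n : ℕ, len x = (n : ℕ∞) →
      {a : A | ∃ z ∈ Λ, (∀ i < n, z.1 i = x.1 i) ∧ z.1 n = some a}.Infinite

/-- `u` occurs as a subblock of `x`. -/
def Occurs (u : List A) (x : FullShift A) : Prop :=
  ∃ i : ℕ, ∀ j < u.length, x.1 (i + j) = u[j]?

/-- The infinite sequences avoiding every word in `Fb` as a subblock. -/
def XinfL (Fb : Set (List A)) : Set (FullShift A) :=
  {x | (∀ n, x.1 n ≠ none) ∧ ∀ u ∈ Fb, ¬ Occurs u x}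

/-- The shift space `X_F` determined by the forbidden words `Fb`: the infinite
sequences avoiding `Fb`, together with the finite words `x` such that for
infinitely many `a ∈ A` some extension `x a y` lies in `X_F^inf`. -/
def XL (Fb : Set (List A)) : Set (FullShift A) :=
  XinfL Fb ∪ {x | ∃ n : ℕ, len x = (n : ℕ∞) ∧
    {a : A | ∃ z ∈ XinfL Fb, (∀ i < n, z.1 i = x.1 i) ∧ z.1 n = some a}.Infinite}

/-- The infinite sequences all of whose length-`N` windows `v` satisfy `ft v = true`
(i.e. avoiding all length-`N` words `w` with `ft w = 0`). -/
def XinfT {N : ℕ} (ft : (Fin N → A) → Bool) : Set (FullShift A) :=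
  {x | (∀ n, x.1 n ≠ none) ∧
    ∀ (i : ℕ) (v : Fin N → A), (∀ j : Fin N, x.1 (i + (j : ℕ)) = some (v j)) → ft v = true}

/-- The shift space `X_f` determined by forbidding the length-`N` words `w`
with `ft w = 0`. -/
def XT {N : ℕ} (ft : (Fin N → A) → Bool) : Set (FullShift A) :=
  XinfT ft ∪ {x | ∃ n : ℕ, len x = (n : ℕ∞) ∧
    {a : A | ∃ z ∈ XinfT ft, (∀ i < n, z.1 i = x.1 i) ∧ z.1 n = some a}.Infinite}

/-- `Y` is an `M`-step shift space: determined by forbidden words of length `M + 1`,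
equivalently by a function `g̃ : B^{M+1} → {0,1}`. -/
def IsStepShift (M : ℕ) (Y : Set (FullShift B)) : Prop :=
  ∃ gt : (Fin (M + 1) → B) → Bool, Y = XT gt

/-- `φ` is a conjugacy from `Λ` onto `Y`: bijective, continuous, shift-commuting
and length-preserving. -/
def IsConjugacy (Λ : Set (FullShift A)) (Y : Set (FullShift B))
    (φ : FullShift A → FullShift B) : Prop :=
  Set.BijOn φ Λ Y ∧ ContinuousOn φ Λ ∧
    (∀ x ∈ Λ, φ (shift x) = shift (φ x)) ∧ ∀ x ∈ Λ, len (φ x) = len x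

/-- `Λ` and `Y` are conjugate shift spaces. -/
def Conjugate (Λ : Set (FullShift A)) (Y : Set (FullShift B)) : Prop :=
  ∃ φ : FullShift A → FullShift B, IsConjugacy Λ Y φ

/-- The periodic sequence `(x_1 ⋯ x_M b)^∞` of period `M + 1`. -/
def per (M : ℕ) (x : Fin M → A) (b : A) : ℕ → A :=
  fun n => if h : n % (M + 1) < M then x ⟨n % (M + 1), h⟩ else b

lemma my_len_eq_coe_iff (x : FullShift A) (n : ℕ) :
    len x = (n : ℕ∞) ↔ x.1 n = none ∧ ∀ i < n, x.1 i ≠ none := by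
  classical
  constructor
  · intro h
    have hne : {k : ℕ∞ | ∃ m : ℕ, k = (m : ℕ∞) ∧ x.1 m = none}.Nonempty := by
      by_contra hc
      rw [Set.not_nonempty_iff_eq_empty] at hc
      rw [len, hc, sInf_empty] at h
      exact (by simp : ((n : ℕ∞) ≠ ⊤)) h.symm
    obtain ⟨k, m, rfl, hm⟩ := hne
    have hex : ∃ m, x.1 m = none := ⟨m, hm⟩
    have hlen : len x = ((Nat.find hex : ℕ) : ℕ∞) := by
      apply le_antisymm
      · exact sInf_le ⟨Nat.find hex, rfl, Nat.find_spec hex⟩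
      · apply le_sInf
        rintro k ⟨j, rfl, hj⟩
        exact_mod_cast Nat.find_le hj
    rw [h] at hlen
    have hn : n = Nat.find hex := by exact_mod_cast hlen
    rw [hn]
    exact ⟨Nat.find_spec hex, fun i hi => Nat.find_min hex hi⟩
  · rintro ⟨h1, h2⟩
    apply le_antisymm
    · exact sInf_le ⟨n, rfl, h1⟩
    · apply le_sInf
      rintro k ⟨j, rfl, hj⟩
      have : n ≤ j := by
        by_contra hc
        exact h2 j (by omega) hj
      exact_mod_cast this

lemma my_len_ne_of_inf (x : FullShift A) (hx : ∀ n, x.1 n ≠ none) (n : ℕ) :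
    len x ≠ (n : ℕ∞) := by
  intro h
  exact hx n ((my_len_eq_coe_iff x n).1 h).1

lemma my_len_word_singleton (a : A) : len (word [a]) = ((1 : ℕ) : ℕ∞) := by
  rw [my_len_eq_coe_iff]
  refine ⟨by simp [word], ?_⟩
  intro i hi
  interval_cases i
  simp [word]

lemma my_part3 {B : Type*} (Y : Set (FullShift B)) (hY : IsStepShift 0 Y)
    (hex : ∃ y ∈ Y, len y = ((1 : ℕ) : ℕ∞)) :
    {y ∈ Y | len y = ((1 : ℕ) : ℕ∞)}.Infinite := by
  obtain ⟨gt, rfl⟩ := hY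
  obtain ⟨y, hy, hylen⟩ := hex
  rcases hy with hy | ⟨n, hn, hS⟩
  · exact absurd hylen (FullShift.my_len_ne_of_inf y hy.1 1)
  have hn1 : n = 1 := by
    rw [hylen] at hn
    exact_mod_cast hn.symm
  subst hn1
  set S : Set B := {a | ∃ z ∈ FullShift.XinfT gt,
    (∀ i < 1, z.1 i = y.1 i) ∧ z.1 1 = some a} with hSdef
  -- every letter in S has gt (const letter) = true
  have hkey : ∀ a ∈ S, gt (fun _ => a) = true := by
    rintro a ⟨z, hz, _, hz1⟩
    apply hz.2 1 (fun _ => a)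
    intro j
    fin_cases j
    simpa using hz1
  -- for each a ∈ S, word [a] ∈ XT gt
  have hwordmem : ∀ a ∈ S, FullShift.word [a] ∈ FullShift.XT gt := by
    intro a ha
    refine Or.inr ⟨1, FullShift.my_len_word_singleton a, ?_⟩
    refine hS.mono ?_
    intro b hb
    refine ⟨FullShift.infSeq (fun n => if n = 0 then a else b), ?_, ?_, ?_⟩
    · constructor
      · intro n; simp [FullShift.infSeq]
      · intro i v hv
        have hv0 : v = fun _ => (if i + ((0 : Fin 1) : ℕ) = 0 then a else b) := by
          funext j
          have hj : j = 0 := by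
            have := j.2
            apply Fin.ext
            omega
          subst hj
          have := hv 0
          simp only [FullShift.infSeq, Option.some.injEq] at this
          exact this.symm
        rw [hv0]
        by_cases h : i + ((0 : Fin 1) : ℕ) = 0
        · simp only [h, if_pos]
          exact hkey a ha
        · simp only [h, if_neg, if_false]
          exact hkey b hb
    · intro i hi
      interval_cases i
      simp [FullShift.infSeq, FullShift.word]
    · simp [FullShift.infSeq]
  have himg : ((fun a => (FullShift.word [a] : FullShift B)) '' S).Infinite := by
    apply hS.image
    intro a _ b _ hab
    have := congrArg (fun w : FullShift B => w.1 0) hab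
    simpa [FullShift.word] using this
  refine himg.mono ?_
  rintro w ⟨a, ha, rfl⟩
  exact ⟨hwordmem a ha, FullShift.my_len_word_singleton a⟩

end FullShift

/-- The 1-step shift forbidding pairs `(x,y)` with
`¬(x = x_0 ∨ y = x)` contains exactly one word of length 1 (namely `x_0`); every
0-step shift containing a word of length 1 contains infinitely many; hence this
1-step shift is not conjugate to any 0-step shift space. -/
theorem stmt15 {A : Type*} [Infinite A] (x0 : A) :
    let ft : (Fin 2 → A) → Bool :=
      fun v => @decide (v 0 = x0 ∨ v 1 = v 0) (Classical.dec _)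
    (FullShift.word [x0] ∈ FullShift.XT ft) ∧
    (∀ x ∈ FullShift.XT ft, FullShift.len x = ((1 : ℕ) : ℕ∞) →
      x = FullShift.word [x0]) ∧
    (∀ (B : Type*) [Infinite B] (Y : Set (FullShift B)), FullShift.IsStepShift 0 Y →
      (∃ y ∈ Y, FullShift.len y = ((1 : ℕ) : ℕ∞)) →
      {y ∈ Y | FullShift.len y = ((1 : ℕ) : ℕ∞)}.Infinite) ∧
    (∀ (B : Type*) [Infinite B] (Y : Set (FullShift B)), FullShift.IsStepShift 0 Y →
      ¬ FullShift.Conjugate (FullShift.XT ft) Y) := by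
  intro ft
  classical
  have hft : ∀ v : Fin 2 → A, ft v = true ↔ (v 0 = x0 ∨ v 1 = v 0) := by
    intro v
    simp only [ft, decide_eq_true_eq]
  -- the witnesses used for the infinite-extension property of `word [x0]`
  have hmem_inf : ∀ a : A,
      FullShift.infSeq (fun n => if n = 0 then x0 else a) ∈ FullShift.XinfT ft := by
    intro a
    constructor
    · intro n
      simp [FullShift.infSeq]
    · intro i v hv
      have hv' : ∀ j : Fin 2, v j = if i + (j : ℕ) = 0 then x0 else a := by
        intro j
        have := hv j
        simp only [FullShift.infSeq, Option.some.injEq] at this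
        exact this.symm
      rw [hft]
      rcases Nat.eq_zero_or_pos i with hi | hi
      · left
        rw [hv' 0]
        simp [hi]
      · right
        rw [hv' 0, hv' 1]
        have h1 : ¬ (i + ((0 : Fin 2) : ℕ) = 0) := by simp; omega
        have h2 : ¬ (i + ((1 : Fin 2) : ℕ) = 0) := by simp
        rw [if_neg h1, if_neg h2]
  -- Part 1
  have part1 : FullShift.word [x0] ∈ FullShift.XT ft := by
    refine Or.inr ⟨1, FullShift.my_len_word_singleton x0, ?_⟩
    have : {a : A | ∃ z ∈ FullShift.XinfT ft,
        (∀ i < 1, z.1 i = (FullShift.word [x0]).1 i) ∧ z.1 1 = some a} = Set.univ := by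
      refine Set.eq_univ_of_forall fun a => ?_
      refine ⟨FullShift.infSeq (fun n => if n = 0 then x0 else a), hmem_inf a, ?_, ?_⟩
      · intro i hi
        interval_cases i
        simp [FullShift.infSeq, FullShift.word]
      · simp [FullShift.infSeq]
    rw [this]
    exact Set.infinite_univ
  -- Part 2
  have part2 : ∀ x ∈ FullShift.XT ft, FullShift.len x = ((1 : ℕ) : ℕ∞) →
      x = FullShift.word [x0] := by
    intro x hx hlen
    rcases hx with hx | ⟨n, hn, hS⟩
    · exact absurd hlen (FullShift.my_len_ne_of_inf x hx.1 1)
    · have hn1 : n = 1 := by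
        rw [hlen] at hn
        exact_mod_cast hn.symm
      subst hn1
      obtain ⟨h1none, h0ne⟩ := (FullShift.my_len_eq_coe_iff x 1).1 hlen
      obtain ⟨c, hc⟩ := Option.ne_none_iff_exists'.1 (h0ne 0 one_pos)
      have hcx : c = x0 := by
        by_contra hcx
        apply hS (Set.Finite.subset (Set.finite_singleton c) ?_)
        rintro a ⟨z, hz, hzi, hz1⟩
        have hz0 : z.1 0 = some c := by rw [hzi 0 one_pos, hc]
        have := hz.2 0 ![c, a] ?_
        · rw [hft] at this
          rcases this with h | h
          · exact absurd h hcx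
          · simpa using h
        · intro j
          fin_cases j
          · simpa using hz0
          · simpa using hz1
      rw [hcx] at hc
      apply Subtype.ext
      funext m
      rcases Nat.eq_zero_or_pos m with rfl | hm
      · rw [hc]; simp [FullShift.word]
      · have h2 : (FullShift.word [x0]).1 m = none := by
          simp only [FullShift.word]
          rw [List.getElem?_eq_none_iff]
          simpa using Nat.succ_le_of_lt hm
        rw [x.2 1 m hm h1none, h2]
  -- Part 4
  refine ⟨part1, part2, fun B _ Y hY hex => FullShift.my_part3 Y hY hex, ?_⟩
  rintro B _ Y hY ⟨φ, hbij, _, _, hlenp⟩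
  have hφmem : φ (FullShift.word [x0]) ∈ Y := hbij.1 part1
  have hφlen : FullShift.len (φ (FullShift.word [x0])) = ((1 : ℕ) : ℕ∞) := by
    rw [hlenp _ part1]
    exact FullShift.my_len_word_singleton x0
  have hinf := FullShift.my_part3 Y hY ⟨φ (FullShift.word [x0]), hφmem, hφlen⟩
  apply hinf
  apply Set.Finite.subset (Set.finite_singleton (φ (FullShift.word [x0])))
  rintro w ⟨hwY, hwlen⟩
  obtain ⟨x, hx, rfl⟩ := hbij.2.2 hwY
  have hxlen : FullShift.len x = ((1 : ℕ) : ℕ∞) := by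
    rw [← hlenp x hx]
    exact hwlen
  rw [part2 x hx hxlen]
  rfl
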